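/- Let ψ ∈ ℂⁿ be a unit vector, P := ψψᴴ, and N a Hermitian n×n complex matrix. Then ⁅⁅N, P⁆, P⁆ = 0 if and only if Nψ = ⟨ψ, Nψ⟩·ψ. That is, the stationary points of the pure-measurement double-bracket flow dρ = [[N, ρ], ρ] among pure states are exactly the eigenstates of the monitored observable N. -/

import Mathlib

open Matrix

lemma vecMulVec_mulVec' {n : ℕ} (u w v : Fin n → ℂ) :
    vecMulVec u w *ᵥ v = (w ⬝ᵥ v) • u := by
  ext i
  simp [vecMulVec, mulVec, dotProduct, Finset.mul_sum, mul_comm, mul_assoc, mul_left_comm]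

lemma mul_vecMulVec' {n : ℕ} (N : Matrix (Fin n) (Fin n) ℂ) (u w : Fin n → ℂ) :
    N * vecMulVec u w = vecMulVec (N *ᵥ u) w := by
  ext i j
  simp [vecMulVec, Matrix.mul_apply, mulVec, dotProduct, Finset.sum_mul, mul_assoc]

lemma vecMulVec_mul' {n : ℕ} (N : Matrix (Fin n) (Fin n) ℂ) (u w : Fin n → ℂ) :
    vecMulVec u w * N = vecMulVec u (w ᵥ* N) := by
  ext i j
  simp [vecMulVec, Matrix.mul_apply, vecMul, dotProduct, Finset.mul_sum, mul_assoc]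

/-- For a pure state `P = ψψᴴ` (`ψ` a unit vector) and Hermitian observable
`N`, the double bracket `⁅⁅N, P⁆, P⁆` vanishes if and only if `ψ` is an
eigenvector of `N`: `Nψ = ⟨ψ, Nψ⟩ψ`. Thus the pure stationary points of the
pure-measurement double-bracket flow are exactly the eigenstates of `N`. -/
theorem double_bracket_vanishes_iff_eigenstate
    (n : ℕ) (ψ : Fin n → ℂ) (hψ : star ψ ⬝ᵥ ψ = 1)
    (N : Matrix (Fin n) (Fin n) ℂ) (hN : Nᴴ = N) :
    let P : Matrix (Fin n) (Fin n) ℂ := vecMulVec ψ (star ψ)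
    ⁅⁅N, P⁆, P⁆ = 0 ↔ N *ᵥ ψ = (star ψ ⬝ᵥ (N *ᵥ ψ)) • ψ := by
  intro P
  set c : ℂ := star ψ ⬝ᵥ (N *ᵥ ψ) with hc
  have hPv : ∀ v : Fin n → ℂ, P *ᵥ v = (star ψ ⬝ᵥ v) • ψ := fun v => vecMulVec_mulVec' _ _ _
  constructor
  · intro h
    have h2 := congrArg (· *ᵥ ψ) h
    simp only [Ring.lie_def, Matrix.sub_mul, Matrix.mul_sub, Matrix.sub_mulVec,
      ← Matrix.mulVec_mulVec, Matrix.zero_mulVec, hPv, hψ, one_smul,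
      dotProduct_smul, smul_eq_mul, mul_one, smul_smul, Matrix.mulVec_sub,
      Matrix.mulVec_smul, dotProduct_sub] at h2
    rw [sub_self, sub_zero, sub_eq_zero] at h2
    exact h2
  · intro h
    have hcstar : star c = c := by
      have h1 : star c = star (N *ᵥ ψ) ⬝ᵥ ψ := by rw [hc, star_dotProduct, star_star]
      rw [h1, star_mulVec, hN, ← Matrix.dotProduct_mulVec]

    have hPN : P * N = vecMulVec ψ (star (N *ᵥ ψ)) := by
      rw [vecMulVec_mul', star_mulVec, hN]
    have hNP : N * P = vecMulVec (N *ᵥ ψ) (star ψ) := mul_vecMulVec' _ _ _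
    have key : N * P = P * N := by
      rw [hNP, hPN, h, star_smul, hcstar]
      ext i j
      simp only [vecMulVec_apply, Pi.smul_apply, smul_eq_mul]
      ring
    have hz : ⁅N, P⁆ = 0 := by rw [Ring.lie_def, key, sub_self]
    rw [hz, Ring.lie_def, zero_mul, mul_zero, sub_self]
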